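/- Let r ∈ ℝ, let z ∈ ℂ with z ≠ 0, and let x ∈ ℝ with x³ + r ≠ 0. Then the wave function ψ_r(x,z) satisfies the Schrödinger eigenvalue equation ∂²ψ_r/∂x²(x,z) − u_r(x)·ψ_r(x,z) = z²·ψ_r(x,z). -/

import Mathlib

noncomputable section DGwave

namespace DGwave

/-- Numerator polynomial. -/
def Nf (r : ℝ) (z : ℂ) (w : ℂ) : ℂ := w ^ 3 + 3 * w ^ 2 * z⁻¹ + 3 * w * (z ^ 2)⁻¹ + (r : ℂ)

def Nf' (z : ℂ) (w : ℂ) : ℂ := 3 * w ^ 2 + 6 * w * z⁻¹ + 3 * (z ^ 2)⁻¹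

def Df (r : ℝ) (w : ℂ) : ℂ := w ^ 3 + (r : ℂ)

/-- Numerator of the first derivative of ψ (over D²). -/
def Mf (r : ℝ) (z : ℂ) (w : ℂ) : ℂ :=
  (Nf' z w - z * Nf r z w) * Df r w - Nf r z w * (3 * w ^ 2)

/-- Derivative of `Mf`. -/
def Mf' (r : ℝ) (z : ℂ) (w : ℂ) : ℂ :=
  (6 * w + 6 * z⁻¹ - z * Nf' z w) * Df r w - z * Nf r z w * (3 * w ^ 2)
    - Nf r z w * (6 * w)

def F (r : ℝ) (z : ℂ) (w : ℂ) : ℂ := Nf r z w / Df r w * Complex.exp (-w * z)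

def Fd (r : ℝ) (z : ℂ) (w : ℂ) : ℂ := Mf r z w / Df r w ^ 2 * Complex.exp (-w * z)

def Fdd (r : ℝ) (z : ℂ) (w : ℂ) : ℂ :=
  ((Mf' r z w - z * Mf r z w) * Df r w - 2 * Mf r z w * (3 * w ^ 2)) / Df r w ^ 3
    * Complex.exp (-w * z)

lemma hasDerivAt_N (r : ℝ) (z : ℂ) (w : ℂ) :
    HasDerivAt (Nf r z) (Nf' z w) w := by
  have h : HasDerivAt (fun w : ℂ => w ^ 3 + 3 * w ^ 2 * z⁻¹ + 3 * w * (z ^ 2)⁻¹ + (r : ℂ))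
      ((3 : ℕ) * w ^ 2 + ((3 : ℂ) * ((2 : ℕ) * w ^ 1)) * z⁻¹ + ((3 : ℂ) * 1) * (z ^ 2)⁻¹) w :=
    (((hasDerivAt_pow 3 w).add
      (((hasDerivAt_pow 2 w).const_mul (3 : ℂ)).mul_const z⁻¹)).add
      (((hasDerivAt_id w).const_mul (3 : ℂ)).mul_const (z ^ 2)⁻¹)).add_const (r : ℂ)
  convert h using 1
  · rfl
  simp only [Nf']; push_cast; ring

lemma hasDerivAt_D (r : ℝ) (w : ℂ) :
    HasDerivAt (Df r) (3 * w ^ 2) w := by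
  have h := (hasDerivAt_pow 3 w).add_const (r : ℂ)
  refine h.congr_deriv ?_
  push_cast; ring

lemma hasDerivAt_E (z : ℂ) (w : ℂ) :
    HasDerivAt (fun w : ℂ => Complex.exp (-w * z)) (-z * Complex.exp (-w * z)) w := by
  have h1 : HasDerivAt (fun w : ℂ => -w * z) (-z) w := by
    simpa using ((hasDerivAt_id w).neg.mul_const z)
  simpa [mul_comm] using h1.cexp

lemma hasDerivAt_M (r : ℝ) (z : ℂ) (w : ℂ) :
    HasDerivAt (Mf r z) (Mf' r z w) w := by
  have hN := hasDerivAt_N r z w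
  have hD := hasDerivAt_D r w
  have hN' : HasDerivAt (fun w => Nf' z w) (6 * w + 6 * z⁻¹) w := by
    have h : HasDerivAt (fun w : ℂ => 3 * w ^ 2 + 6 * w * z⁻¹ + 3 * (z ^ 2)⁻¹)
        (((3 : ℂ) * ((2 : ℕ) * w ^ 1)) + ((6 : ℂ) * 1) * z⁻¹) w :=
      (((hasDerivAt_pow 2 w).const_mul (3 : ℂ)).add
        (((hasDerivAt_id w).const_mul (6 : ℂ)).mul_const z⁻¹)).add_const (3 * (z ^ 2)⁻¹)
    convert h using 1
    · rfl
    push_cast; ring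
  have hD' : HasDerivAt (fun w : ℂ => 3 * w ^ 2) (6 * w) w := by
    have := (hasDerivAt_pow 2 w).const_mul (3 : ℂ)
    refine this.congr_deriv ?_
    push_cast; ring
  have h : HasDerivAt (Mf r z)
      ((6 * w + 6 * z⁻¹ - z * Nf' z w) * Df r w + (Nf' z w - z * Nf r z w) * (3 * w ^ 2)
        - (Nf' z w * (3 * w ^ 2) + Nf r z w * (6 * w))) w :=
    ((hN'.sub ((hN.const_mul z))).mul hD).sub (hN.mul hD')
  convert h using 1
  simp only [Mf']; ring

lemma hasDerivAt_F (r : ℝ) (z : ℂ) (w : ℂ) (hw : Df r w ≠ 0) :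
    HasDerivAt (F r z) (Fd r z w) w := by
  have h := ((hasDerivAt_N r z w).div (hasDerivAt_D r w) hw).mul (hasDerivAt_E z w)
  refine h.congr_deriv ?_
  simp only [Fd, Mf, F, Pi.div_apply]
  field_simp
  ring

lemma hasDerivAt_Fd (r : ℝ) (z : ℂ) (w : ℂ) (hw : Df r w ≠ 0) :
    HasDerivAt (Fd r z) (Fdd r z w) w := by
  have hD2 : HasDerivAt (fun w => Df r w ^ 2) (2 * Df r w ^ 1 * (3 * w ^ 2)) w :=
    (hasDerivAt_D r w).pow 2
  have hw2 : Df r w ^ 2 ≠ 0 := pow_ne_zero _ hw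
  have h := (((hasDerivAt_M r z w).div hD2 hw2)).mul (hasDerivAt_E z w)
  refine h.congr_deriv ?_
  simp only [Fdd, Fd, Pi.div_apply]
  field_simp
  ring

end DGwave

end DGwave

set_option maxHeartbeats 2000000 in
open DGwave in
/-- The wave function `ψ_r(x,z) = (x³ + 3x²z⁻¹ + 3xz⁻² + r)/(x³ + r) · exp(−xz)`
(the first nontrivial rank-one bispectral function of Duistermaat–Grünbaum) is an
eigenfunction of the Schrödinger operator `∂_x² − u_r(x)` with eigenvalue `z²`, where
`u_r(x) = (6x⁴ − 12rx)/(x³ + r)²` is the corresponding rational KdV potential. -/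
theorem schrodinger_eigen_DG_wave (r : ℝ) (z : ℂ) (hz : z ≠ 0) :
    let ψ : ℝ → ℂ := fun x =>
      ((x : ℂ) ^ 3 + 3 * (x : ℂ) ^ 2 * z⁻¹ + 3 * (x : ℂ) * (z ^ 2)⁻¹ + (r : ℂ)) /
          ((x : ℂ) ^ 3 + (r : ℂ)) * Complex.exp (-(x : ℂ) * z)
    let u : ℝ → ℂ := fun x =>
      (6 * (x : ℂ) ^ 4 - 12 * (r : ℂ) * (x : ℂ)) / ((x : ℂ) ^ 3 + (r : ℂ)) ^ 2
    ∀ x : ℝ, x ^ 3 + r ≠ 0 →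
      deriv (deriv ψ) x - u x * ψ x = z ^ 2 * ψ x := by
  intro ψ u x hx
  have hψ : ψ = fun y : ℝ => F r z (y : ℂ) := rfl
  have hxC : Df r (x : ℂ) ≠ 0 := by
    simp only [Df]
    intro h
    apply hx
    have h' : ((x ^ 3 + r : ℝ) : ℂ) = 0 := by push_cast; exact h
    exact_mod_cast h'
  have hcont : ContinuousAt (fun y : ℝ => Df r (y : ℂ)) x := by
    simp only [Df]; fun_prop
  have hopen : ∀ᶠ y : ℝ in nhds x, Df r (y : ℂ) ≠ 0 := hcont.eventually_ne hxC
  have hderiv : deriv ψ =ᶠ[nhds x] fun y : ℝ => Fd r z (y : ℂ) := by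
    filter_upwards [hopen] with y hy
    rw [hψ]
    exact ((hasDerivAt_F r z (y : ℂ) hy).comp_ofReal).deriv
  have h2 : deriv (deriv ψ) x = Fdd r z (x : ℂ) := by
    rw [hderiv.deriv_eq]
    exact ((hasDerivAt_Fd r z (x : ℂ) hxC).comp_ofReal).deriv
  have hD : ((x : ℂ) ^ 3 + (r : ℂ)) ≠ 0 := hxC
  have key : (Mf' r z ↑x - z * Mf r z ↑x) * ((x:ℂ) ^ 3 + (r:ℂ)) - 2 * Mf r z ↑x * (3 * (x:ℂ) ^ 2)
      = (6 * (x:ℂ) ^ 4 - 12 * (r:ℂ) * (x:ℂ)) * Nf r z ↑x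
        + z ^ 2 * Nf r z ↑x * ((x:ℂ) ^ 3 + (r:ℂ)) ^ 2 := by
    have hz2 : z ^ 2 ≠ 0 := pow_ne_zero 2 hz
    have hN : (x:ℂ) ^ 3 + 3 * (x:ℂ) ^ 2 * z⁻¹ + 3 * (x:ℂ) * (z ^ 2)⁻¹ + (r:ℂ)
        = (z ^ 2 * (x:ℂ) ^ 3 + 3 * z * (x:ℂ) ^ 2 + 3 * (x:ℂ) + z ^ 2 * (r:ℂ)) / z ^ 2 := by
      rw [eq_div_iff hz2]; field_simp
    have hN' : 3 * (x:ℂ) ^ 2 + 6 * (x:ℂ) * z⁻¹ + 3 * (z ^ 2)⁻¹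
        = (3 * z ^ 2 * (x:ℂ) ^ 2 + 6 * z * (x:ℂ) + 3) / z ^ 2 := by
      rw [eq_div_iff hz2]; field_simp
    have hi : z⁻¹ = 1 / z := inv_eq_one_div z
    simp only [Mf', Mf, Nf', Nf, Df]
    rw [hN, hN', hi]
    field_simp
    ring
  have expand : Fdd r z ↑x - u x * F r z ↑x - z ^ 2 * F r z ↑x
      = ((Mf' r z ↑x - z * Mf r z ↑x) * ((x:ℂ) ^ 3 + (r:ℂ)) - 2 * Mf r z ↑x * (3 * (x:ℂ) ^ 2)
          - ((6 * (x:ℂ) ^ 4 - 12 * (r:ℂ) * (x:ℂ)) * Nf r z ↑x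
             + z ^ 2 * Nf r z ↑x * ((x:ℂ) ^ 3 + (r:ℂ)) ^ 2))
        / ((x:ℂ) ^ 3 + (r:ℂ)) ^ 3 * Complex.exp (-(x:ℂ) * z) := by
    simp only [Fdd, F, u, Df]
    field_simp [hD]
    ring
  rw [key] at expand
  simp only [sub_self, zero_div, zero_mul] at expand
  rw [h2, hψ]
  linear_combination expand
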